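/- Let G be a connected graph on at least two vertices and let x be the positive unit eigenvector (Perron vector) of the adjacency matrix of G corresponding to the eigenvalue ρ(G). Let u and v be distinct vertices of G with x_u ≥ x_v, and let v_1, …, v_s (with s ≥ 1) be distinct neighbors of v, none of which equals u and none of which is adjacent to u. Let G′ be the graph obtained from G by deleting the edges vv_1, …, vv_s and adding the edges uv_1, …, uv_s. Then ρ(G′) > ρ(G). -/

import Mathlib

open SimpleGraph

open Finset Matrix

namespace WXHaux

/-- The set of eigenvalues of a matrix. -/
def eigSet {V : Type*} [Fintype V] (A : Matrix V V ℝ) : Set ℝ :=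
  {t : ℝ | ∃ x : V → ℝ, x ≠ 0 ∧ A.mulVec x = t • x}

lemma adjMatrix_irrel {V : Type*} (G : SimpleGraph V) (h1 h2 : DecidableRel G.Adj) :
    @SimpleGraph.adjMatrix ℝ V G h1 _ _ = @SimpleGraph.adjMatrix ℝ V G h2 _ _ := by
  rw [Subsingleton.elim h1 h2]

variable {V : Type*} [Fintype V] [DecidableEq V]

lemma dot_expand (b : OrthonormalBasis V ℝ (EuclideanSpace ℝ V)) (c d : V → ℝ) :
    (fun w => ∑ i, c i * b i w) ⬝ᵥ (fun w => ∑ i, d i * b i w) = ∑ i, c i * d i := by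
  have hb : ∀ i j, ∑ w, (b i w * b j w) = if i = j then 1 else 0 := by
    intro i j
    have := orthonormal_iff_ite.mp b.orthonormal i j
    simpa [PiLp.inner_apply, RCLike.inner_apply, mul_comm] using this
  calc (fun w => ∑ i, c i * b i w) ⬝ᵥ (fun w => ∑ i, d i * b i w)
      = ∑ w, ∑ i, ∑ j, (c i * d j) * (b i w * b j w) := by
        simp only [dotProduct, Finset.sum_mul_sum]
        exact sum_congr rfl fun w _ => sum_congr rfl fun i _ => sum_congr rfl fun j _ => by ring
    _ = ∑ i, ∑ w, ∑ j, (c i * d j) * (b i w * b j w) := Finset.sum_comm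
    _ = ∑ i, ∑ j, ∑ w, (c i * d j) * (b i w * b j w) := sum_congr rfl fun i _ => Finset.sum_comm
    _ = ∑ i, ∑ j, (c i * d j) * ∑ w, (b i w * b j w) := by
        simp [Finset.mul_sum]
    _ = ∑ i, c i * d i := by
        refine Finset.sum_congr rfl fun i _ => ?_
        rw [Finset.sum_eq_single i]
        · simp [hb]
        · intro j _ hj; simp [hb, Ne.symm hj]
        · simp

lemma repr_expand (A : Matrix V V ℝ) (hA : A.IsHermitian) (y : V → ℝ) :
    y = (fun w => ∑ i, (∑ w', hA.eigenvectorBasis i w' * y w') * hA.eigenvectorBasis i w) := by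
  set b := hA.eigenvectorBasis
  have h0 := b.sum_repr' (WithLp.toLp 2 y)
  funext w
  have h1 := congrArg (fun z : EuclideanSpace ℝ V => z w) h0
  simp only [WithLp.ofLp_sum, Finset.sum_apply, PiLp.smul_apply, smul_eq_mul, PiLp.inner_apply,
    RCLike.inner_apply, starRingEnd_apply, star_trivial] at h1
  rw [← h1]
  simp [mul_comm]

lemma mulVec_expand (A : Matrix V V ℝ) (hA : A.IsHermitian) (y : V → ℝ) :
    A.mulVec y = (fun w => ∑ i, (hA.eigenvalues i * (∑ w', hA.eigenvectorBasis i w' * y w'))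
      * hA.eigenvectorBasis i w) := by
  set b := hA.eigenvectorBasis with hbdef
  set μ := hA.eigenvalues
  set c : V → ℝ := fun i => ∑ w', b i w' * y w' with hc
  funext w
  calc A.mulVec y w = ∑ w', A w w' * ∑ i, c i * b i w' := by
        rw [show A.mulVec y w = ∑ w', A w w' * y w' from rfl]
        exact Finset.sum_congr rfl fun w' _ => by rw [← congrFun (repr_expand A hA y) w']
    _ = ∑ i, c i * ∑ w', A w w' * b i w' := by
        simp only [Finset.mul_sum]
        rw [Finset.sum_comm]
        exact sum_congr rfl fun i _ => sum_congr rfl fun w' _ => by ring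
    _ = ∑ i, (μ i * c i) * b i w := by
        refine Finset.sum_congr rfl fun i _ => ?_
        have h2 := congrFun (hA.mulVec_eigenvectorBasis i) w
        rw [show (∑ w', A w w' * b i w') = A.mulVec (⇑(b i)) w from rfl, h2]
        simp only [Pi.smul_apply, smul_eq_mul]
        ring

lemma eigenvalues_mem (A : Matrix V V ℝ) (hA : A.IsHermitian) (i : V) :
    hA.eigenvalues i ∈ eigSet A := by
  refine ⟨⇑(hA.eigenvectorBasis i), ?_, hA.mulVec_eigenvectorBasis i⟩
  intro h0
  have h1 := hA.eigenvectorBasis.orthonormal.1 i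
  rw [show (hA.eigenvectorBasis i) = (0 : EuclideanSpace ℝ V) from (WithLp.ofLp_eq_zero 2).mp h0] at h1
  simp at h1

lemma eigSet_bddAbove (G : SimpleGraph V) [DecidableRel G.Adj] :
    BddAbove (eigSet (G.adjMatrix ℝ)) := by
  refine ⟨(Fintype.card V : ℝ), fun t ht => ?_⟩
  obtain ⟨y, hy0, hy⟩ := ht
  obtain ⟨w0, hw0⟩ := Function.ne_iff.mp hy0
  have hne : (Finset.univ : Finset V).Nonempty := ⟨w0, Finset.mem_univ w0⟩
  obtain ⟨i, -, hi⟩ := Finset.exists_max_image Finset.univ (fun w => |y w|) hne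
  have hipos : 0 < |y i| := lt_of_lt_of_le (abs_pos.mpr hw0) (hi w0 (Finset.mem_univ w0))
  have key : |t| * |y i| ≤ (Fintype.card V : ℝ) * |y i| := by
    have h1 : t * y i = (G.adjMatrix ℝ).mulVec y i := by rw [hy]; simp
    have h2 : |(G.adjMatrix ℝ).mulVec y i| ≤ (Fintype.card V : ℝ) * |y i| := by
      rw [show (G.adjMatrix ℝ).mulVec y i = ∑ b, G.adjMatrix ℝ i b * y b from rfl]
      calc |∑ b, G.adjMatrix ℝ i b * y b| ≤ ∑ b, |G.adjMatrix ℝ i b * y b| :=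
            Finset.abs_sum_le_sum_abs _ _
        _ ≤ ∑ _b : V, |y i| := by
            refine Finset.sum_le_sum fun b _ => ?_
            rw [abs_mul]
            by_cases h : G.Adj i b
            · simp only [SimpleGraph.adjMatrix_apply, if_pos h, abs_one, one_mul]
              exact hi b (Finset.mem_univ b)
            · simp [h]
        _ = (Fintype.card V : ℝ) * |y i| := by simp [mul_comm]
    calc |t| * |y i| = |t * y i| := (abs_mul t (y i)).symm
      _ = |(G.adjMatrix ℝ).mulVec y i| := by rw [h1]
      _ ≤ _ := h2
  exact le_trans (le_abs_self t) (le_of_mul_le_mul_right key hipos)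

lemma rayleigh_le (A : Matrix V V ℝ) (hA : A.IsHermitian) (hbdd : BddAbove (eigSet A))
    (y : V → ℝ) : y ⬝ᵥ A.mulVec y ≤ sSup (eigSet A) * (y ⬝ᵥ y) := by
  set b := hA.eigenvectorBasis
  set μ := hA.eigenvalues
  set L := sSup (eigSet A) with hL
  set c : V → ℝ := fun i => ∑ w', b i w' * y w' with hc
  have hμL : ∀ i, μ i ≤ L := fun i => le_csSup hbdd (eigenvalues_mem A hA i)
  have h1 : y ⬝ᵥ A.mulVec y = ∑ i, c i * (μ i * c i) := by
    nth_rewrite 1 [repr_expand A hA y]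
    rw [mulVec_expand A hA y]
    exact dot_expand b c (fun i => μ i * c i)
  have h2 : y ⬝ᵥ y = ∑ i, c i * c i := by
    nth_rewrite 1 [repr_expand A hA y]
    nth_rewrite 2 [repr_expand A hA y]
    exact dot_expand b c c
  rw [h1, h2, Finset.mul_sum]
  refine Finset.sum_le_sum fun i _ => ?_
  have h3 : c i * (μ i * c i) = μ i * (c i * c i) := by ring
  rw [h3]
  exact mul_le_mul_of_nonneg_right (hμL i) (mul_self_nonneg _)

lemma rayleigh_eq (A : Matrix V V ℝ) (hA : A.IsHermitian) (hbdd : BddAbove (eigSet A))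
    (y : V → ℝ) (hy1 : y ⬝ᵥ y = 1) (h : y ⬝ᵥ A.mulVec y = sSup (eigSet A)) :
    A.mulVec y = sSup (eigSet A) • y := by
  set b := hA.eigenvectorBasis
  set μ := hA.eigenvalues
  set L := sSup (eigSet A) with hL
  set c : V → ℝ := fun i => ∑ w', b i w' * y w' with hc
  have hμL : ∀ i, μ i ≤ L := fun i => le_csSup hbdd (eigenvalues_mem A hA i)
  have h1 : y ⬝ᵥ A.mulVec y = ∑ i, c i * (μ i * c i) := by
    nth_rewrite 1 [repr_expand A hA y]
    rw [mulVec_expand A hA y]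
    exact dot_expand b c (fun i => μ i * c i)
  have h2 : y ⬝ᵥ y = ∑ i, c i * c i := by
    nth_rewrite 1 [repr_expand A hA y]
    nth_rewrite 2 [repr_expand A hA y]
    exact dot_expand b c c
  have hz : ∑ i, (L - μ i) * (c i * c i) = 0 := by
    have e1 : ∑ i, c i * (μ i * c i) = L := by rw [← h1, h]
    have e2 : ∑ i, c i * c i = 1 := by rw [← h2, hy1]
    calc ∑ i, (L - μ i) * (c i * c i)
        = L * ∑ i, c i * c i - ∑ i, c i * (μ i * c i) := by
          rw [Finset.mul_sum, ← Finset.sum_sub_distrib]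
          exact Finset.sum_congr rfl fun i _ => by ring
      _ = 0 := by rw [e1, e2]; ring
  have hterm : ∀ i ∈ Finset.univ, (L - μ i) * (c i * c i) = 0 := by
    rw [← Finset.sum_eq_zero_iff_of_nonneg]
    · exact hz
    · intro i _
      exact mul_nonneg (by linarith [hμL i]) (mul_self_nonneg _)
  have hmc : ∀ i, μ i * c i = L * c i := by
    intro i
    rcases mul_eq_zero.mp (hterm i (Finset.mem_univ i)) with h' | h'
    · have : μ i = L := by linarith
      rw [this]
    · have : c i = 0 := by
        rcases mul_eq_zero.mp h' with h'' | h'' <;> exact h''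
      rw [this, mul_zero, mul_zero]
  rw [mulVec_expand A hA y]
  funext w
  rw [Pi.smul_apply, smul_eq_mul]
  nth_rewrite 2 [repr_expand A hA y]
  rw [Finset.mul_sum]
  exact Finset.sum_congr rfl fun i _ => by rw [hmc i]; ring

end WXHaux

/-- The spectral radius (largest adjacency eigenvalue) of a finite graph. -/
noncomputable def graphSpecRad {V : Type*} [Fintype V] (G : SimpleGraph V) : ℝ :=
  letI := Classical.decRel G.Adj
  sSup {t : ℝ | ∃ x : V → ℝ, x ≠ 0 ∧ (G.adjMatrix ℝ).mulVec x = t • x}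

namespace WXHaux

variable {V : Type*} [Fintype V] [DecidableEq V]

lemma graphSpecRad_eq (G : SimpleGraph V) [h : DecidableRel G.Adj] :
    graphSpecRad G = sSup (eigSet (G.adjMatrix ℝ)) := by
  unfold graphSpecRad eigSet
  rw [adjMatrix_irrel G (Classical.decRel G.Adj) h]

end WXHaux

open WXHaux in
/-- (Wu–Xiao–Hong) Let `G` be a connected graph (on at least two vertices) with Perron
vector `x` (a positive unit eigenvector for `ρ(G)`). Suppose `x u ≥ x v`, and
`v₁, …, v_s` (`s ≥ 1`, given as an injective `f : Fin s → V`) are distinct neighbors of `v`,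
each different from `u` and not adjacent to `u`. If `G'` is obtained from `G` by deleting
the edges `v vᵢ` and adding the edges `u vᵢ`, then `ρ(G') > ρ(G)`. -/
theorem stmt16 {V : Type*} [Fintype V] [DecidableEq V] (G : SimpleGraph V)
    [DecidableRel G.Adj] (hconn : G.Connected) (hcard : 2 ≤ Fintype.card V)
    (x : V → ℝ) (hpos : ∀ w, 0 < x w) (hunit : ∑ w, x w ^ 2 = 1)
    (heig : (G.adjMatrix ℝ).mulVec x = graphSpecRad G • x)
    (u v : V) (huv : u ≠ v) (hx : x v ≤ x u)
    (s : ℕ) (hs : 1 ≤ s) (f : Fin s → V) (hinj : Function.Injective f)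
    (hnbr : ∀ i, G.Adj v (f i)) (hfu : ∀ i, f i ≠ u) (hnadj : ∀ i, ¬ G.Adj u (f i))
    (G' : SimpleGraph V)
    (hG' : ∀ a b, G'.Adj a b ↔
      ((G.Adj a b ∧ ¬((a = v ∧ ∃ i, b = f i) ∨ (b = v ∧ ∃ i, a = f i)))
        ∨ ((a = u ∧ ∃ i, b = f i) ∨ (b = u ∧ ∃ i, a = f i)))) :
    graphSpecRad G < graphSpecRad G' := by
  letI instG' : DecidableRel G'.Adj := fun a b => decidable_of_iff' _ (hG' a b)
  set S : ℝ := ∑ i, x (f i) with hS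
  set T : Finset V := Finset.image f Finset.univ with hTdef
  have hT : ∀ b, b ∈ T ↔ ∃ i, b = f i := by
    intro b; simp [hTdef, eq_comm]
  have hTsum : ∑ b ∈ T, x b = S := by
    rw [hTdef, Finset.sum_image (fun i _ j _ h => hinj h)]
  have hufE : ¬∃ i, u = f i := fun ⟨i, h⟩ => hfu i h.symm
  have hvfE : ¬∃ i, v = f i := fun ⟨i, h⟩ => (hnbr i).ne h
  have hTu : u ∉ T := fun h => hufE ((hT u).mp h)
  have hTv : v ∉ T := fun h => hvfE ((hT v).mp h)
  -- per-vertex comparison of the two mulVecs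
  have claim : ∀ a, (G'.adjMatrix ℝ).mulVec x a = (G.adjMatrix ℝ).mulVec x a
      + ((if a = u then S else 0) - (if a = v then S else 0)
        + (if a ∈ T then x u - x v else 0)) := by
    intro a
    rw [SimpleGraph.adjMatrix_mulVec_apply, SimpleGraph.adjMatrix_mulVec_apply]
    by_cases hau : a = u
    · subst hau
      have hN : G'.neighborFinset a = G.neighborFinset a ∪ T := by
        ext b
        simp only [SimpleGraph.mem_neighborFinset, Finset.mem_union, hT b, hG' a b]
        constructor
        · rintro (⟨h, -⟩ | ⟨⟨-, h⟩ | ⟨-, h⟩⟩)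
          · exact Or.inl h
          · exact Or.inr h
          · exact absurd h hufE
        · rintro (h | h)
          · refine Or.inl ⟨h, ?_⟩
            rintro (⟨h2, -⟩ | ⟨-, h3⟩)
            · exact huv h2
            · exact hufE h3
          · exact Or.inr (Or.inl ⟨by trivial, h⟩)
      have hdisj : Disjoint (G.neighborFinset a) T := by
        rw [Finset.disjoint_left]
        intro b hb hbT
        rw [SimpleGraph.mem_neighborFinset] at hb
        obtain ⟨i, rfl⟩ := (hT b).mp hbT
        exact hnadj i hb
      rw [hN, Finset.sum_union hdisj, hTsum, if_pos rfl, if_neg huv, if_neg hTu]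
      ring
    · by_cases hav : a = v
      · subst hav
        have hN : G'.neighborFinset a = G.neighborFinset a \ T := by
          ext b
          simp only [SimpleGraph.mem_neighborFinset, Finset.mem_sdiff, hT b, hG' a b]
          constructor
          · rintro (⟨h, h2⟩ | ⟨⟨h, -⟩ | ⟨-, h⟩⟩)
            · exact ⟨h, fun hE => h2 (Or.inl ⟨by trivial, hE⟩)⟩
            · exact absurd h (Ne.symm huv)
            · exact absurd h hvfE
          · rintro ⟨h, hE⟩
            refine Or.inl ⟨h, ?_⟩
            rintro (⟨-, h2⟩ | ⟨-, h3⟩)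
            · exact hE h2
            · exact hvfE h3
        have hsub : T ⊆ G.neighborFinset a := by
          intro b hb
          obtain ⟨i, rfl⟩ := (hT b).mp hb
          exact (SimpleGraph.mem_neighborFinset _ _ _).mpr (hnbr i)
        rw [hN, Finset.sum_sdiff_eq_sub hsub, hTsum, if_neg (Ne.symm huv), if_pos rfl,
          if_neg hTv]
        ring
      · by_cases haT : a ∈ T
        · obtain ⟨j, rfl⟩ := (hT a).mp haT
          have hE : ∃ i, f j = f i := ⟨j, rfl⟩
          have hN : G'.neighborFinset (f j) = (G.neighborFinset (f j) \ {v}) ∪ {u} := by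
            ext b
            simp only [SimpleGraph.mem_neighborFinset, Finset.mem_union, Finset.mem_sdiff,
              Finset.mem_singleton, hG' (f j) b]
            constructor
            · rintro (⟨h, h2⟩ | ⟨⟨h, -⟩ | ⟨h, -⟩⟩)
              · exact Or.inl ⟨h, fun hbv => h2 (Or.inr ⟨hbv, hE⟩)⟩
              · exact absurd h (hfu j)
              · exact Or.inr h
            · rintro (⟨h, hbv⟩ | rfl)
              · refine Or.inl ⟨h, ?_⟩
                rintro (⟨h2, -⟩ | ⟨h3, -⟩)
                · exact (hnbr j).ne' h2
                · exact hbv h3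
              · exact Or.inr (Or.inr ⟨by trivial, hE⟩)
          have hdisj : Disjoint (G.neighborFinset (f j) \ {v}) {u} := by
            rw [Finset.disjoint_singleton_right, Finset.mem_sdiff]
            rintro ⟨hmem, -⟩
            rw [SimpleGraph.mem_neighborFinset] at hmem
            exact hnadj j hmem.symm
          have hvsub : {v} ⊆ G.neighborFinset (f j) := by
            rw [Finset.singleton_subset_iff, SimpleGraph.mem_neighborFinset]
            exact (hnbr j).symm
          rw [hN, Finset.sum_union hdisj, Finset.sum_sdiff_eq_sub hvsub,
            Finset.sum_singleton, Finset.sum_singleton, if_neg hau, if_neg hav, if_pos haT]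
          ring
        · have hEa : ¬∃ i, a = f i := fun h => haT ((hT a).mpr h)
          have hN : G'.neighborFinset a = G.neighborFinset a := by
            ext b
            simp only [SimpleGraph.mem_neighborFinset, hG' a b]
            constructor
            · rintro (⟨h, -⟩ | ⟨⟨h, -⟩ | ⟨-, h⟩⟩)
              · exact h
              · exact absurd h hau
              · exact absurd h hEa
            · intro h
              refine Or.inl ⟨h, ?_⟩
              rintro (⟨h2, -⟩ | ⟨-, h3⟩)
              · exact hav h2
              · exact hEa h3
          rw [hN, if_neg hau, if_neg hav, if_neg haT]
          ring
  -- basic quantities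
  have hxx : x ⬝ᵥ x = 1 := by
    rw [← hunit]
    exact Finset.sum_congr rfl fun w _ => (pow_two (x w)).symm
  have hρdot : x ⬝ᵥ (G.adjMatrix ℝ).mulVec x = graphSpecRad G := by
    rw [heig, dotProduct_smul, hxx]
    simp
  have hSpos : 0 < S := by
    have : Nonempty (Fin s) := ⟨⟨0, hs⟩⟩
    exact Finset.sum_pos (fun i _ => hpos _) Finset.univ_nonempty
  -- Rayleigh quotient of x in G'
  have hR : x ⬝ᵥ (G'.adjMatrix ℝ).mulVec x
      = graphSpecRad G + (x u - x v) * (2 * S) := by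
    have e0 : x ⬝ᵥ (G'.adjMatrix ℝ).mulVec x
        = (∑ a, x a * (G.adjMatrix ℝ).mulVec x a)
          + ((∑ a, x a * (if a = u then S else 0)) - (∑ a, x a * (if a = v then S else 0))
            + (∑ a, x a * (if a ∈ T then x u - x v else 0))) := by
      calc x ⬝ᵥ (G'.adjMatrix ℝ).mulVec x
          = ∑ a, (x a * (G.adjMatrix ℝ).mulVec x a
            + ((x a * (if a = u then S else 0)) - (x a * (if a = v then S else 0))
              + (x a * (if a ∈ T then x u - x v else 0)))) :=
            Finset.sum_congr rfl fun a _ => by rw [claim a]; ring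
        _ = _ := by
            rw [Finset.sum_add_distrib, Finset.sum_add_distrib, Finset.sum_sub_distrib]
    have e1 : (∑ a, x a * (if a = u then S else 0)) = x u * S := by
      simp [mul_ite]
    have e2 : (∑ a, x a * (if a = v then S else 0)) = x v * S := by
      simp [mul_ite]
    have e3 : (∑ a, x a * (if a ∈ T then x u - x v else 0)) = S * (x u - x v) := by
      simp only [mul_ite, mul_zero]
      rw [Finset.sum_ite_mem, Finset.univ_inter, ← Finset.sum_mul, hTsum]
    rw [e0, e1, e2, e3, show (∑ a, x a * (G.adjMatrix ℝ).mulVec x a)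
      = x ⬝ᵥ (G.adjMatrix ℝ).mulVec x from rfl, hρdot]
    ring
  -- spectral facts for G'
  have hA' : (G'.adjMatrix ℝ).IsHermitian := by
    show _ᴴ = _
    ext a b
    simp only [Matrix.conjTranspose_apply, SimpleGraph.adjMatrix_apply, star_trivial]
    by_cases h : G'.Adj a b
    · rw [if_pos h.symm, if_pos h]
    · rw [if_neg (fun h' => h h'.symm), if_neg h]
  have hbdd' : BddAbove (eigSet (G'.adjMatrix ℝ)) := eigSet_bddAbove G'
  have hρ' : graphSpecRad G' = sSup (eigSet (G'.adjMatrix ℝ)) := graphSpecRad_eq G'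
  have hle : x ⬝ᵥ (G'.adjMatrix ℝ).mulVec x ≤ sSup (eigSet (G'.adjMatrix ℝ)) := by
    have := rayleigh_le (G'.adjMatrix ℝ) hA' hbdd' x
    rwa [hxx, mul_one] at this
  have hge : graphSpecRad G ≤ x ⬝ᵥ (G'.adjMatrix ℝ).mulVec x := by
    rw [hR]
    nlinarith [hSpos, hx]
  by_contra hcon
  push_neg at hcon
  rw [hρ'] at hcon
  have heqL : sSup (eigSet (G'.adjMatrix ℝ)) = graphSpecRad G :=
    le_antisymm hcon (le_trans hge hle)
  have hRe : x ⬝ᵥ (G'.adjMatrix ℝ).mulVec x = sSup (eigSet (G'.adjMatrix ℝ)) :=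
    le_antisymm hle (heqL ▸ hge)
  have hev := rayleigh_eq (G'.adjMatrix ℝ) hA' hbdd' x hxx hRe
  have h3 := congrFun hev u
  rw [Pi.smul_apply, smul_eq_mul, heqL] at h3
  have h4 := claim u
  rw [if_pos rfl, if_neg huv, if_neg hTu] at h4
  have h5 := congrFun heig u
  rw [Pi.smul_apply, smul_eq_mul] at h5
  rw [h4, h5] at h3
  -- h3 : ρ * x u + (S - 0 + 0) = ρ * x u
  linarith
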